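/- Let φ_t be a continuous flow on a compact metric space X, μ a Borel probability measure on X invariant under φ_t, and A ⊂ X a Borel set. Then for every T > 0, μ(A) ≤ (1/T)·|{t ∈ [0,T] : φ_t(A) ∩ A ≠ ∅}|, where |·| denotes Lebesgue measure on ℝ. -/

import Mathlib

open MeasureTheory Set Filter Topology

/-- Translation invariance of Lebesgue outer measure for arbitrary sets. -/
lemma vol_preimage_add_right (c : ℝ) (s : Set ℝ) :
    volume ((fun t : ℝ => t + c) ⁻¹' s) = volume s := by
  have h : (fun t : ℝ => t + c) = (MeasurableEquiv.addRight c : ℝ → ℝ) := rfl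
  rw [h, ← MeasurableEquiv.map_apply (MeasurableEquiv.addRight c)]
  have : Measure.map (MeasurableEquiv.addRight c : ℝ → ℝ) volume = volume := by
    have := map_add_right_eq_self (volume : Measure ℝ) c
    simpa [← h] using this
  rw [this]

/-- For a continuous flow `φ` on a compact metric space `X`,
an invariant Borel probability measure `μ`, and a Borel set `A`, for every `T > 0`,
`μ(A) ≤ (1/T) · |{t ∈ [0,T] : φ_t(A) ∩ A ≠ ∅}|`. -/
theorem stmt_0 {X : Type*} [MetricSpace X] [CompactSpace X]
    [MeasurableSpace X] [BorelSpace X]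
    (φ : Flow ℝ X) (μ : Measure X) [IsProbabilityMeasure μ]
    (hinv : ∀ t : ℝ, μ.map (φ.toFun t) = μ)
    (A : Set X) (hA : MeasurableSet A)
    (T : ℝ) (hT : 0 < T) :
    μ A ≤ ENNReal.ofReal (1 / T) *
      volume {t : ℝ | t ∈ Icc (0 : ℝ) T ∧ (φ.toFun t '' A ∩ A).Nonempty} := by
  set S : Set ℝ := {t : ℝ | t ∈ Icc (0 : ℝ) T ∧ (φ.toFun t '' A ∩ A).Nonempty} with hSdef
  have hScont : volume S ≠ ⊤ := by
    have : S ⊆ Icc (0 : ℝ) T := fun t ht => ht.1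
    exact ne_top_of_le_ne_top (by simp [Real.volume_Icc]) (measure_mono this)
  -- the measurable set on which we do Fubini
  set E : Set (ℝ × X) := (fun p : ℝ × X => φ.toFun (-p.1) p.2) ⁻¹' A with hEdef
  have hcont : Continuous fun p : ℝ × X => φ.toFun (-p.1) p.2 :=
    φ.continuous continuous_fst.neg continuous_snd
  have hE : MeasurableSet E := hcont.measurable hA
  set ν : Measure ℝ := volume.restrict (Icc (0 : ℝ) T) with hνdef
  -- key pointwise lemma: each x-slice has measure at most volume S
  have key : ∀ x : X, volume ({t : ℝ | φ.toFun (-t) x ∈ A} ∩ Icc (0 : ℝ) T) ≤ volume S := by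
    intro x
    set R : Set ℝ := {t : ℝ | φ.toFun (-t) x ∈ A} ∩ Icc (0 : ℝ) T with hRdef
    rcases eq_empty_or_nonempty R with h | h
    · simp [h]
    refine ENNReal.le_of_forall_pos_le_add fun ε hε _ => ?_
    have hbdd : BddBelow R := ⟨0, fun t ht => ht.2.1⟩
    obtain ⟨t₀, ht₀R, ht₀lt⟩ := Real.lt_sInf_add_pos h (by exact_mod_cast hε : (0 : ℝ) < ε)
    have hsub : R ⊆ Ico (sInf R) t₀ ∪ (fun t : ℝ => t + -t₀) ⁻¹' S := by
      intro t ht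
      rcases lt_or_ge t t₀ with hlt | hle
      · exact Or.inl ⟨csInf_le hbdd ht, hlt⟩
      · refine Or.inr ?_
        have hmem : t + -t₀ ∈ S := by
          refine ⟨⟨by linarith, by have := ht.2.2; have := ht₀R.2.1; linarith⟩, ?_⟩
          refine ⟨φ.toFun (-t₀) x, ⟨φ.toFun (-t) x, ht.1, ?_⟩, ht₀R.1⟩
          have harg : t + -t₀ + -t = -t₀ := by ring
          rw [← φ.map_add, harg]
        exact hmem
    calc volume R ≤ volume (Ico (sInf R) t₀) + volume ((fun t : ℝ => t + -t₀) ⁻¹' S) :=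
          le_trans (measure_mono hsub) (measure_union_le _ _)
      _ = ENNReal.ofReal (t₀ - sInf R) + volume S := by
          rw [Real.volume_Ico, vol_preimage_add_right]
      _ ≤ volume S + ε := by
          rw [add_comm]
          refine add_le_add_right ?_ _
          calc ENNReal.ofReal (t₀ - sInf R) ≤ ENNReal.ofReal (ε : ℝ) :=
                ENNReal.ofReal_le_ofReal (by linarith)
            _ = (ε : ENNReal) := ENNReal.ofReal_coe_nnreal
  -- Fubini computation, t-direction
  have hfub1 : (ν.prod μ) E = ENNReal.ofReal T * μ A := by
    rw [Measure.prod_apply hE]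
    have hslice : ∀ t : ℝ, μ (Prod.mk t ⁻¹' E) = μ A := by
      intro t
      have : Prod.mk t ⁻¹' E = φ.toFun (-t) ⁻¹' A := rfl
      rw [this, ← Measure.map_apply (φ.continuous_toFun (-t)).measurable hA, hinv (-t)]
    simp only [hslice]
    rw [lintegral_const, hνdef, Measure.restrict_apply_univ, Real.volume_Icc, mul_comm]
    norm_num
  -- Fubini computation, x-direction
  have hfub2 : (ν.prod μ) E ≤ volume S := by
    rw [Measure.prod_apply_symm hE]
    have hbound : ∀ x : X, ν ((fun t => (t, x)) ⁻¹' E) ≤ volume S := by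
      intro x
      have : (fun t : ℝ => (t, x)) ⁻¹' E = {t : ℝ | φ.toFun (-t) x ∈ A} := rfl
      have hm : MeasurableSet {t : ℝ | φ.toFun (-t) x ∈ A} :=
        (φ.continuous continuous_neg (continuous_const : Continuous fun _ : ℝ => x)).measurable hA
      rw [this, Measure.restrict_apply hm]
      exact key x
    calc ∫⁻ x, ν ((fun t => (t, x)) ⁻¹' E) ∂μ ≤ ∫⁻ _, volume S ∂μ :=
          lintegral_mono hbound
      _ = volume S := by simp
  have hmain : ENNReal.ofReal T * μ A ≤ volume S := hfub1 ▸ hfub2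
  calc μ A = ENNReal.ofReal (1 / T) * (ENNReal.ofReal T * μ A) := by
        rw [← mul_assoc, ← ENNReal.ofReal_mul (by positivity), one_div_mul_cancel hT.ne',
          ENNReal.ofReal_one, one_mul]
    _ ≤ ENNReal.ofReal (1 / T) * volume S := mul_le_mul_right hmain _
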